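/- (NFDH strip packing bound) A set I of rectangles with widths at most 1 can be packed by the Next-Fit Decreasing Height algorithm into a strip of width 1 and height at most 2·a(I) + max_{i∈I} h(i), where a(I) is the total area of the rectangles. -/

import Mathlib

open Classical in
/-- cumulative x-position of an item in a shelf (list of items placed left to right). -/
noncomputable def nfdhXpos {ι : Type*} (w : ι → ℝ) : List ι → ι → ℝ
  | [], _ => 0
  | a :: t, i => if i = a then 0 else w a + nfdhXpos w t i

/-- greedy split of a list into the items fitting in remaining capacity `cap` and the rest. -/
noncomputable def nfdhSplit {ι : Type*} (w : ι → ℝ) : ℝ → List ι → List ι × List ι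
  | _, [] => ([], [])
  | cap, a :: t =>
    if w a ≤ cap then
      let p := nfdhSplit w (cap - w a) t
      (a :: p.1, p.2)
    else ([], a :: t)

lemma nfdhSplit_append {ι : Type*} (w : ι → ℝ) :
    ∀ (cap : ℝ) (L : List ι), (nfdhSplit w cap L).1 ++ (nfdhSplit w cap L).2 = L := by
  intro cap L
  induction L generalizing cap with
  | nil => simp [nfdhSplit]
  | cons a t ih =>
    by_cases hfit : w a ≤ cap
    · simp [nfdhSplit, hfit, ih]
    · simp [nfdhSplit, hfit]

lemma nfdhSplit_width {ι : Type*} (w : ι → ℝ) :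
    ∀ (cap : ℝ) (L : List ι), 0 ≤ cap → (((nfdhSplit w cap L).1).map w).sum ≤ cap := by
  intro cap L
  induction L generalizing cap with
  | nil => intro hc; simpa [nfdhSplit] using hc
  | cons a t ih =>
    intro hc
    by_cases hfit : w a ≤ cap
    · have := ih (cap - w a) (by linarith)
      simp only [nfdhSplit, hfit, if_pos]
      simp only [List.map_cons, List.sum_cons]
      linarith
    · simp [nfdhSplit, hfit, hc]

lemma nfdhSplit_rest_head {ι : Type*} (w : ι → ℝ) :
    ∀ (cap : ℝ) (L : List ι) (b : ι), (nfdhSplit w cap L).2.head? = some b →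
      cap < (((nfdhSplit w cap L).1).map w).sum + w b := by
  intro cap L
  induction L generalizing cap with
  | nil => intro b hb; simp [nfdhSplit] at hb
  | cons a t ih =>
    intro b hb
    by_cases hfit : w a ≤ cap
    · simp only [nfdhSplit, hfit, if_pos] at hb ⊢
      have := ih (cap - w a) b hb
      simp only [List.map_cons, List.sum_cons]
      linarith
    · simp only [nfdhSplit, hfit, if_neg, not_false_iff] at hb ⊢
      simp only [List.head?_cons, Option.some.injEq] at hb
      subst hb
      simp only [List.map_nil, List.sum_nil, zero_add]
      linarith [lt_of_not_ge hfit]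

lemma nfdhXpos_nonneg {ι : Type*} (w : ι → ℝ) :
    ∀ (l : List ι) (i : ι), (∀ j ∈ l, 0 ≤ w j) → 0 ≤ nfdhXpos w l i := by
  intro l
  induction l with
  | nil => intro i _; simp [nfdhXpos]
  | cons a t ih =>
    intro i hw
    have h0 : 0 ≤ w a := hw a (by simp)
    have ht : 0 ≤ nfdhXpos w t i := ih i (fun j hj => hw j (by simp [hj]))
    simp only [nfdhXpos]
    split
    · exact le_refl 0
    · linarith

lemma nfdhXpos_bound {ι : Type*} (w : ι → ℝ) :
    ∀ (l : List ι), (∀ j ∈ l, 0 ≤ w j) → ∀ i ∈ l,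
      nfdhXpos w l i + w i ≤ (l.map w).sum := by
  intro l
  induction l with
  | nil => intro _ i hi; simp at hi
  | cons a t ih =>
    intro hw i hi
    have hsum : 0 ≤ (t.map w).sum := by
      apply List.sum_nonneg
      intro x hx
      simp only [List.mem_map] at hx
      obtain ⟨j, hj, rfl⟩ := hx
      exact hw j (by simp [hj])
    simp only [nfdhXpos, List.map_cons, List.sum_cons]
    split
    · rename_i heq; subst heq; linarith
    · rename_i hne
      have hit : i ∈ t := by
        rcases List.mem_cons.mp hi with h | h
        · exact absurd h hne
        · exact h
      have := ih (fun j hj => hw j (by simp [hj])) i hit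
      linarith

lemma nfdhXpos_pairwise {ι : Type*} (w : ι → ℝ) :
    ∀ (l : List ι), l.Nodup → (∀ j ∈ l, 0 ≤ w j) →
      l.Pairwise (fun i j => nfdhXpos w l i + w i ≤ nfdhXpos w l j) := by
  intro l
  induction l with
  | nil => intro _ _; exact List.Pairwise.nil
  | cons a t ih =>
    intro hnd hw
    have hwt : ∀ j ∈ t, 0 ≤ w j := fun j hj => hw j (by simp [hj])
    have hand := List.nodup_cons.mp hnd
    refine List.pairwise_cons.mpr ⟨?_, ?_⟩
    · intro j hj
      have hja : j ≠ a := fun hh => hand.1 (hh ▸ hj)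
      simp only [nfdhXpos, eq_self_iff_true, if_true, if_neg hja]
      have := nfdhXpos_nonneg w t j hwt
      linarith
    · have hp := ih hand.2 hwt
      refine hp.imp_of_mem ?_
      intro i j hi hj hij
      have hia : i ≠ a := fun hh => hand.1 (hh ▸ hi)
      have hja : j ≠ a := fun hh => hand.1 (hh ▸ hj)
      simp only [nfdhXpos, if_neg hia, if_neg hja]
      linarith
lemma nfdh_disjoint_x {a b c d : ℝ} (s t : Set ℝ) (hbc : b ≤ c) :
    Disjoint (Set.Ioo a b ×ˢ s) (Set.Ioo c d ×ˢ t) := by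
  rw [Set.disjoint_left]
  rintro ⟨p, q⟩ ⟨hp1, _⟩ ⟨hp2, _⟩
  simp only [Set.mem_Ioo] at hp1 hp2
  linarith [hp1.2, hp2.1]

lemma nfdh_disjoint_y {a b c d : ℝ} (s t : Set ℝ) (hbc : b ≤ c) :
    Disjoint (s ×ˢ Set.Ioo a b) (t ×ˢ Set.Ioo c d) := by
  rw [Set.disjoint_left]
  rintro ⟨p, q⟩ ⟨_, hp1⟩ ⟨_, hp2⟩
  simp only [Set.mem_Ioo] at hp1 hp2
  linarith [hp1.2, hp2.1]

lemma nfdh_shift {x1 x2 x3 x4 y1 h1 y3 h3 c : ℝ}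
    (hd : Disjoint (Set.Ioo x1 x2 ×ˢ Set.Ioo y1 (y1 + h1)) (Set.Ioo x3 x4 ×ˢ Set.Ioo y3 (y3 + h3))) :
    Disjoint (Set.Ioo x1 x2 ×ˢ Set.Ioo (y1 + c) (y1 + c + h1))
             (Set.Ioo x3 x4 ×ˢ Set.Ioo (y3 + c) (y3 + c + h3)) := by
  rw [Set.disjoint_left] at hd ⊢
  rintro ⟨p, q⟩ ⟨hp1, hq1⟩ ⟨hp2, hq2⟩
  simp only [Set.mem_Ioo] at hq1 hq2
  exact hd (a := (p, q - c)) ⟨hp1, by constructor <;> simp <;> linarith [hq1.1, hq1.2]⟩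
    ⟨hp2, by constructor <;> simp <;> linarith [hq2.1, hq2.2]⟩

/-- Main inductive NFDH packing lemma. -/
lemma nfdh_pack {ι : Type*} (w h : ι → ℝ) :
    ∀ (n : ℕ) (L : List ι), L.length ≤ n →
    L.Pairwise (fun i j => h j ≤ h i) → L.Nodup →
    (∀ i ∈ L, 0 < w i ∧ w i ≤ 1) → (∀ i ∈ L, 0 < h i) →
    ∃ (H : ℝ) (x y : ι → ℝ),
      0 ≤ H ∧
      (L = [] → H ≤ 0) ∧
      (∀ b, L.head? = some b →
        H ≤ h b + 2 * (L.map (fun i => w i * h i)).sum - w b * h b) ∧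
      (∀ i ∈ L, 0 ≤ x i ∧ x i + w i ≤ 1 ∧ 0 ≤ y i ∧ y i + h i ≤ H) ∧
      L.Pairwise (fun i j =>
        Disjoint (Set.Ioo (x i) (x i + w i) ×ˢ Set.Ioo (y i) (y i + h i))
                 (Set.Ioo (x j) (x j + w j) ×ˢ Set.Ioo (y j) (y j + h j))) := by
  intro n
  induction n with
  | zero =>
    intro L hL _ _ _ _
    have : L = [] := List.length_eq_zero_iff.mp (Nat.le_zero.mp hL)
    subst this
    exact ⟨0, 0, 0, le_refl 0, fun _ => le_refl 0, fun b hb => by simp at hb,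
      fun i hi => by simp at hi, List.Pairwise.nil⟩
  | succ n ih =>
    intro L hL hsort hnd hw hh
    match L with
    | [] =>
      exact ⟨0, 0, 0, le_refl 0, fun _ => le_refl 0, fun b hb => by simp at hb,
        fun i hi => by simp at hi, List.Pairwise.nil⟩
    | a :: t =>
      classical
      set s := (nfdhSplit w (1 - w a) t).1 with hs
      set r := (nfdhSplit w (1 - w a) t).2 with hr
      have hsr : s ++ r = t := nfdhSplit_append w (1 - w a) t
      have hwa : 0 < w a ∧ w a ≤ 1 := hw a (by simp)
      have hha : 0 < h a := hh a (by simp)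
      -- memberships
      have hsub_s : ∀ i ∈ s, i ∈ t := fun i hi => by rw [← hsr]; exact List.mem_append_left _ hi
      have hsub_r : ∀ i ∈ r, i ∈ t := fun i hi => by rw [← hsr]; exact List.mem_append_right _ hi
      have hsortt : t.Pairwise (fun i j => h j ≤ h i) := hsort.of_cons
      have hndt : (a :: t).Nodup := hnd
      have hat : a ∉ t := (List.nodup_cons.mp hndt).1
      have hndt2 : t.Nodup := (List.nodup_cons.mp hndt).2
      have hndsr : (s ++ r).Nodup := hsr ▸ hndt2
      have hnds : s.Nodup := hndsr.of_append_left
      have hndr : r.Nodup := hndsr.of_append_right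
      have hdisj_sr : ∀ i ∈ s, i ∉ r := fun i hi hir =>
        (List.disjoint_of_nodup_append hndsr) hi hir
      -- sortedness of r
      have hsortr : r.Pairwise (fun i j => h j ≤ h i) := by
        rw [← hsr] at hsortt
        exact (List.pairwise_append.mp hsortt).2.1
      have hsorts : s.Pairwise (fun i j => h j ≤ h i) := by
        rw [← hsr] at hsortt
        exact (List.pairwise_append.mp hsortt).1
      have h_s_ge_r : ∀ i ∈ s, ∀ j ∈ r, h j ≤ h i := by
        rw [← hsr] at hsortt
        exact fun i hi j hj => (List.pairwise_append.mp hsortt).2.2 i hi j hj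
      -- induction on r
      have hrlen : r.length ≤ n := by
        have : s.length + r.length = t.length := by rw [← List.length_append, hsr]
        have ht : t.length ≤ n := by simpa using hL
        omega
      obtain ⟨H', x', y', hH'0, hH'nil, hH'bound, hfit', hpw'⟩ :=
        ih r hrlen hsortr hndr (fun i hi => hw i (by simp [hsub_r i hi]))
          (fun i hi => hh i (by simp [hsub_r i hi]))
      -- the shelf S = a :: s
      set S := a :: s with hS
      have hndS : S.Nodup := by
        rw [hS, List.nodup_cons]
        exact ⟨fun hmem => hat (hsub_s a hmem), hnds⟩
      have hwS : ∀ j ∈ S, 0 ≤ w j := by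
        intro j hj
        rcases List.mem_cons.mp hj with rfl | hj
        · exact le_of_lt hwa.1
        · exact le_of_lt (hw j (by simp [hsub_s j hj])).1
      have hwidth_s : (s.map w).sum ≤ 1 - w a :=
        nfdhSplit_width w (1 - w a) t (by linarith [hwa.2])
      have hwidth_S : (S.map w).sum ≤ 1 := by
        simp only [hS, List.map_cons, List.sum_cons]
        linarith
      have hhS : ∀ i ∈ S, h i ≤ h a := by
        intro i hi
        rcases List.mem_cons.mp hi with rfl | hi
        · exact le_refl _
        · exact (List.pairwise_cons.mp hsort).1 i (hsub_s i hi)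
      -- definitions
      refine ⟨h a + H',
        (fun i => if i ∈ S then nfdhXpos w S i else x' i),
        (fun i => if i ∈ S then 0 else y' i + h a), ?_, ?_, ?_, ?_, ?_⟩
      · linarith
      · intro hcon; simp at hcon
      · -- area bound
        intro b hb
        simp only [List.head?_cons, Option.some.injEq] at hb
        subst hb
        have hsums : 0 ≤ (s.map fun i => w i * h i).sum := by
          apply List.sum_nonneg
          intro x hx
          simp only [List.mem_map] at hx
          obtain ⟨j, hj, rfl⟩ := hx
          have h1 := (hw j (by simp [hsub_s j hj])).1
          have h2 := hh j (by simp [hsub_s j hj])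
          positivity
        have hsumr : 0 ≤ (r.map fun i => w i * h i).sum := by
          apply List.sum_nonneg
          intro x hx
          simp only [List.mem_map] at hx
          obtain ⟨j, hj, rfl⟩ := hx
          have h1 := (hw j (by simp [hsub_r j hj])).1
          have h2 := hh j (by simp [hsub_r j hj])
          positivity
        have hsplitsum : ((a :: t).map fun i => w i * h i).sum
            = w a * h a + (s.map fun i => w i * h i).sum + (r.map fun i => w i * h i).sum := by
          rw [← hsr]
          simp [List.map_append]
          ring
        rw [hsplitsum]
        -- goal: h a + H' ≤ h a + 2*(waha + As + Ar) - waha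
        cases hrc : r.head? with
        | none =>
          have hrnil : r = [] := List.head?_eq_none_iff.mp hrc
          have hH'z : H' ≤ 0 := hH'nil hrnil
          nlinarith [hwa.1, hha, hsums, hsumr, mul_pos hwa.1 hha]
        | some b =>
          have hbr : b ∈ r := List.mem_of_mem_head? hrc
          have hbw := hw b (by simp [hsub_r b hbr])
          have hbh := hh b (by simp [hsub_r b hbr])
          have hbound := hH'bound b hrc
          -- key: h b ≤ w a * h a + A s + w b * h b
          have hwide : 1 - w a < (s.map w).sum + w b :=
            nfdhSplit_rest_head w (1 - w a) t b hrc
          have hAs_ge : (s.map w).sum * h b ≤ (s.map fun i => w i * h i).sum := by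
            rw [← List.sum_map_mul_right]
            apply List.sum_le_sum
            intro j hj
            have hwj := (hw j (by simp [hsub_s j hj])).1
            have := h_s_ge_r j hj b hbr
            nlinarith
          have hkey : h b ≤ w a * h a + (s.map fun i => w i * h i).sum + w b * h b := by
            have h1 : h b ≤ h a := (List.pairwise_cons.mp hsort).1 b (hsub_r b hbr)
            have hwidnn : 0 ≤ (s.map w).sum := by
              apply List.sum_nonneg
              intro x hx
              simp only [List.mem_map] at hx
              obtain ⟨j, hj, rfl⟩ := hx
              exact le_of_lt (hw j (by simp [hsub_s j hj])).1
            nlinarith [hwa.1, hwide, hAs_ge]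
          linarith [hsums, hsumr, hbound]
      · -- fitting constraints
        intro i hi
        have hmem : i ∈ S ∨ i ∈ r := by
          rcases List.mem_cons.mp hi with rfl | hi
          · exact Or.inl (by simp [hS])
          · rw [← hsr] at hi
            rcases List.mem_append.mp hi with h1 | h1
            · exact Or.inl (by simp [hS, h1])
            · exact Or.inr h1
        rcases hmem with hiS | hir
        · have hxnn := nfdhXpos_nonneg w S i hwS
          have hxb := nfdhXpos_bound w S hwS i hiS
          have hhi : 0 < h i := hh i (by
            rcases List.mem_cons.mp hiS with rfl | hi'
            · simp
            · simp [hsub_s i hi'])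
          simp only [if_pos hiS]
          exact ⟨hxnn, le_trans hxb hwidth_S, le_refl 0,
            by linarith [hhS i hiS]⟩
        · have hiNS : i ∉ S := by
            intro hiS
            rcases List.mem_cons.mp hiS with rfl | hi'
            · exact hat (hsub_r i hir)
            · exact hdisj_sr i hi' hir
          obtain ⟨hx0, hx1, hy0, hy1⟩ := hfit' i hir
          simp only [if_neg hiNS]
          exact ⟨hx0, hx1, by linarith, by linarith⟩
      · -- pairwise disjointness
        have hgoal : (S ++ r).Pairwise (fun i j =>
            Disjoint (Set.Ioo ((if i ∈ S then nfdhXpos w S i else x' i))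
                ((if i ∈ S then nfdhXpos w S i else x' i) + w i) ×ˢ
                Set.Ioo ((if i ∈ S then 0 else y' i + h a))
                ((if i ∈ S then 0 else y' i + h a) + h i))
              (Set.Ioo ((if j ∈ S then nfdhXpos w S j else x' j))
                ((if j ∈ S then nfdhXpos w S j else x' j) + w j) ×ˢ
                Set.Ioo ((if j ∈ S then 0 else y' j + h a))
                ((if j ∈ S then 0 else y' j + h a) + h j))) := by
          rw [List.pairwise_append]
          refine ⟨?_, ?_, ?_⟩
          · -- within shelf: x separation
            have := nfdhXpos_pairwise w S hndS hwS
            refine this.imp_of_mem ?_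
            intro i j hi hj hij
            simp only [if_pos hi, if_pos hj]
            exact nfdh_disjoint_x _ _ hij
          · -- within rest
            refine hpw'.imp_of_mem ?_
            intro i j hi hj hij
            have hiNS : i ∉ S := by
              intro hiS
              rcases List.mem_cons.mp hiS with rfl | hi'
              · exact hat (hsub_r i hi)
              · exact hdisj_sr i hi' hi
            have hjNS : j ∉ S := by
              intro hjS
              rcases List.mem_cons.mp hjS with rfl | hj'
              · exact hat (hsub_r j hj)
              · exact hdisj_sr j hj' hj
            simp only [if_neg hiNS, if_neg hjNS]
            exact nfdh_shift hij
          · -- shelf vs rest: y separation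
            intro i hi j hj
            have hjNS : j ∉ S := by
              intro hjS
              rcases List.mem_cons.mp hjS with rfl | hj'
              · exact hat (hsub_r j hj)
              · exact hdisj_sr j hj' hj
            simp only [if_pos hi, if_neg hjNS]
            have h1 : 0 + h i ≤ y' j + h a := by
              have := (hfit' j hj).2.2.1
              have := hhS i hi
              linarith
            exact nfdh_disjoint_y _ _ (by simpa using h1)
        have heq : S ++ r = a :: t := by rw [hS]; simp [hsr]
        rw [heq] at hgoal
        exact hgoal

/-- NFDH strip packing bound: rectangles of width at most 1 can be packed into
a strip of width 1 and height at most `2·a(I) + max h`. -/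
theorem stmt_3 {ι : Type*} (I : Finset ι) (hne : I.Nonempty)
    (w h : ι → ℝ)
    (hw : ∀ i ∈ I, w i ∈ Set.Ioc (0:ℝ) 1)
    (hh : ∀ i ∈ I, 0 < h i) :
    ∃ (H : ℝ) (x y : ι → ℝ),
      H ≤ 2 * ∑ i ∈ I, w i * h i + I.sup' hne h ∧
      (∀ i ∈ I, 0 ≤ x i ∧ x i + w i ≤ 1 ∧ 0 ≤ y i ∧ y i + h i ≤ H) ∧
      (∀ i ∈ I, ∀ j ∈ I, i ≠ j →
        Disjoint (Set.Ioo (x i) (x i + w i) ×ˢ Set.Ioo (y i) (y i + h i))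
                 (Set.Ioo (x j) (x j + w j) ×ˢ Set.Ioo (y j) (y j + h j))) := by
  classical
  set rel : ι → ι → Prop := fun i j => h j ≤ h i with hrel
  haveI : DecidableRel rel := fun i j => Classical.dec _
  haveI : IsTotal ι rel := ⟨fun i j => le_total (h j) (h i)⟩
  haveI : IsTrans ι rel := ⟨fun i j k hij hjk => le_trans hjk hij⟩
  set L : List ι := List.insertionSort rel I.toList with hLdef
  have hperm : L.Perm I.toList := List.perm_insertionSort rel I.toList
  have hmemL : ∀ i, i ∈ L ↔ i ∈ I := by
    intro i
    rw [hperm.mem_iff, Finset.mem_toList]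
  have hsort : L.Pairwise rel := List.pairwise_insertionSort rel I.toList
  have hnd : L.Nodup := hperm.nodup_iff.mpr I.nodup_toList
  obtain ⟨H, x, y, hH0, _, hbound, hfit, hpw⟩ :=
    nfdh_pack w h L.length L (le_refl _) hsort hnd
      (fun i hi => by
        have := hw i ((hmemL i).mp hi)
        exact ⟨this.1, this.2⟩)
      (fun i hi => hh i ((hmemL i).mp hi))
  have hsum : (L.map fun i => w i * h i).sum = ∑ i ∈ I, w i * h i := by
    rw [(hperm.map _).sum_eq, Finset.sum_map_toList]
  refine ⟨H, x, y, ?_, fun i hi => hfit i ((hmemL i).mpr hi), ?_⟩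
  · -- height bound
    have hne2 := hne
    obtain ⟨i0, hi0⟩ := hne2
    have hLne : L ≠ [] := by
      intro hnil
      have := (hmemL i0).mpr hi0
      rw [hnil] at this
      simp at this
    obtain ⟨b, L', hLc⟩ := List.exists_cons_of_ne_nil hLne
    · have hb := hbound b (by rw [hLc]; rfl)
      rw [hsum] at hb
      have hbI : b ∈ I := (hmemL b).mp (by rw [hLc]; simp)
      have hble : h b ≤ I.sup' hne h := Finset.le_sup' h hbI
      have hbw := hw b hbI
      have hbh := hh b hbI
      have : 0 ≤ w b * h b := le_of_lt (mul_pos hbw.1 hbh)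
      linarith
  · intro i hi j hj hij
    exact @List.Pairwise.forall _ _ _ ⟨fun _ _ hd => hd.symm⟩ hpw i ((hmemL i).mpr hi) j ((hmemL j).mpr hj) hij
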